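/- Let P₀ be a symmetric positive semidefinite n×n real matrix, R a symmetric positive semidefinite m×m real matrix, and H an m×n real matrix such that H P₀ Hᵀ + R is invertible. Then the a posteriori covariance matrix P_p = P₀ − P₀ Hᵀ (H P₀ Hᵀ + R)⁻¹ H P₀ is symmetric positive semidefinite. -/

import Mathlib

open Matrix

/-- The a posteriori covariance matrix `P_p = P₀ − P₀ Hᵀ (H P₀ Hᵀ + R)⁻¹ H P₀` is symmetric
positive semidefinite whenever `P₀` and `R` are symmetric positive semidefinite and
`H P₀ Hᵀ + R` is invertible. -/
theorem stmt_2 {m n : ℕ}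
    (P₀ : Matrix (Fin n) (Fin n) ℝ) (R : Matrix (Fin m) (Fin m) ℝ)
    (H : Matrix (Fin m) (Fin n) ℝ)
    (hP₀ : P₀.PosSemidef) (hR : R.PosSemidef) (hinv : IsUnit (H * P₀ * Hᵀ + R)) :
    (P₀ - P₀ * Hᵀ * (H * P₀ * Hᵀ + R)⁻¹ * H * P₀).PosSemidef := by
  set S := H * P₀ * Hᵀ + R with hS
  have hPt : P₀ᵀ = P₀ := by simpa [Matrix.IsSymm] using hP₀.1
  have hdet : IsUnit S.det := (Matrix.isUnit_iff_isUnit_det S).mp hinv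
  have hSt : Sᵀ = S := by
    have hRt : Rᵀ = R := by simpa [Matrix.IsSymm] using hR.1
    rw [hS, transpose_add, transpose_mul, transpose_mul, transpose_transpose, hPt, hRt,
      Matrix.mul_assoc]
  have hSit : (S⁻¹)ᵀ = S⁻¹ := by rw [Matrix.transpose_nonsing_inv, hSt]
  set K := P₀ * Hᵀ * S⁻¹ with hK
  have hmul : S⁻¹ * S = 1 := Matrix.nonsing_inv_mul S hdet
  have hKt : Kᵀ = S⁻¹ * H * P₀ := by
    rw [hK, transpose_mul, transpose_mul, transpose_transpose, hPt, hSit, Matrix.mul_assoc]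
  have hKSK : K * S * Kᵀ = P₀ * Hᵀ * S⁻¹ * H * P₀ := by
    rw [hKt, hK]
    calc P₀ * Hᵀ * S⁻¹ * S * (S⁻¹ * H * P₀)
        = P₀ * Hᵀ * ((S⁻¹ * S) * S⁻¹) * H * P₀ := by
          simp only [Matrix.mul_assoc]
      _ = P₀ * Hᵀ * S⁻¹ * H * P₀ := by rw [hmul, Matrix.one_mul]
  have key : P₀ - P₀ * Hᵀ * S⁻¹ * H * P₀ =
      (1 - K * H) * P₀ * (1 - K * H)ᵀ + K * R * Kᵀ := by
    have expand : (1 - K * H) * P₀ * (1 - K * H)ᵀ + K * R * Kᵀ =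
        P₀ - K * H * P₀ - P₀ * (K * H)ᵀ + (K * H * P₀ * (K * H)ᵀ + K * R * Kᵀ) := by
      rw [transpose_sub, transpose_one]
      noncomm_ring
    have h2 : K * H * P₀ * (K * H)ᵀ + K * R * Kᵀ = K * S * Kᵀ := by
      rw [hS, transpose_mul, hKt]
      simp only [Matrix.mul_assoc, Matrix.add_mul, Matrix.mul_add]
    have h3 : P₀ * (K * H)ᵀ = P₀ * Hᵀ * S⁻¹ * H * P₀ := by
      rw [transpose_mul, hKt]
      simp only [Matrix.mul_assoc]
    have h4 : K * H * P₀ = P₀ * Hᵀ * S⁻¹ * H * P₀ := by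
      rw [hK]
    rw [expand, h2, hKSK, h3, h4]
    abel
  rw [key]
  exact ((hP₀.mul_mul_conjTranspose_same (1 - K * H))).add
    (hR.mul_mul_conjTranspose_same K)
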